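/- arXiv:1610.01205 — 3 statements merged into one kernel-verified Lean document; each statement's English description precedes it below -/
import Mathlib

section
/- Let x, y, z be (jointly distributed) real random variables with joint probability density ρ(x,y,z) = (1/(4π)) · e^{−|(x,y,z)|} / |(x,y,z)| on ℝ³, where |(x,y,z)| = √(x²+y²+z²). Then E|2xz − y²| = 4√2 − 2. -/
open Real MeasureTheory

open Set

lemma integrable_comp_polarCoord_symm_iff (f : ℝ × ℝ → ℝ) :
    Integrable f ↔
      IntegrableOn (fun p => p.1 • f (polarCoord.symm p)) polarCoord.target := by
  set B : ℝ × ℝ → ℝ × ℝ →L[ℝ] ℝ × ℝ := fun p =>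
    LinearMap.toContinuousLinearMap (Matrix.toLin (Module.Basis.finTwoProd ℝ) (Module.Basis.finTwoProd ℝ)
      !![Real.cos p.2, -p.1 * Real.sin p.2; Real.sin p.2, p.1 * Real.cos p.2]) with hB
  have A : ∀ p ∈ polarCoord.target, HasFDerivWithinAt polarCoord.symm (B p) polarCoord.target p :=
    fun p _ => (hasFDerivAt_polarCoord_symm p).hasFDerivWithinAt
  have B_det : ∀ p, (B p).det = p.1 := by
    intro p
    conv_rhs => rw [← one_mul p.1, ← cos_sq_add_sin_sq p.2]
    simp only [hB, neg_mul, LinearMap.det_toContinuousLinearMap, LinearMap.det_toLin,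
      Matrix.det_fin_two_of, sub_neg_eq_add]
    ring
  have hmeas : MeasurableSet polarCoord.target := polarCoord.open_target.measurableSet
  have hinj : InjOn polarCoord.symm polarCoord.target := by
    have := polarCoord.symm.injOn
    rwa [OpenPartialHomeomorph.symm_source] at this
  have h0 : Integrable f ↔ IntegrableOn f polarCoord.source := by
    rw [IntegrableOn, Measure.restrict_congr_set polarCoord_source_ae_eq_univ,
      Measure.restrict_univ]
  have key : IntegrableOn f (polarCoord.symm '' polarCoord.target) ↔
      IntegrableOn (fun p => |(B p).det| • f (polarCoord.symm p)) polarCoord.target :=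
    integrableOn_image_iff_integrableOn_abs_det_fderiv_smul volume hmeas A hinj f
  rw [h0, ← polarCoord.symm_image_target_eq_source, key]
  constructor
  · intro h
    exact h.congr_fun (fun p hp => by
      simp only [B_det, abs_of_pos (show (0:ℝ) < p.1 from hp.1)]) hmeas
  · intro h
    exact h.congr_fun (fun p hp => by
      simp only [B_det, abs_of_pos (show (0:ℝ) < p.1 from hp.1)]) hmeas

instance : Measure.IsAddHaarMeasure (volume : Measure (ℝ × ℝ × ℝ)) :=
  Measure.prod.instIsAddHaarMeasure _ _

noncomputable def rotFun (p : ℝ × ℝ × ℝ) : ℝ × ℝ × ℝ :=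
  ((p.1 + p.2.2) / Real.sqrt 2, p.2.1, (p.1 - p.2.2) / Real.sqrt 2)

lemma rotFun_invol (p : ℝ × ℝ × ℝ) : rotFun (rotFun p) = p := by
  have h2 : Real.sqrt 2 * Real.sqrt 2 = 2 := Real.mul_self_sqrt (by norm_num)
  have hne : Real.sqrt 2 ≠ 0 := by positivity
  unfold rotFun
  ext <;> simp only <;> field_simp
  all_goals (rw [sq, h2]; ring)

noncomputable def rotEquiv : (ℝ × ℝ × ℝ) ≃ₗ[ℝ] (ℝ × ℝ × ℝ) where
  toFun := rotFun
  invFun := rotFun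
  map_add' p q := by unfold rotFun; ext <;> simp <;> ring
  map_smul' c p := by unfold rotFun; ext <;> simp <;> ring
  left_inv := rotFun_invol
  right_inv := rotFun_invol

lemma rotEquiv_apply (p : ℝ × ℝ × ℝ) : rotEquiv p = rotFun p := rfl

lemma rot_continuous : Continuous rotFun := by
  unfold rotFun; fun_prop

lemma rot_measurePreserving :
    MeasurePreserving rotFun (volume : Measure (ℝ × ℝ × ℝ)) volume := by
  have hdet : LinearMap.det (rotEquiv : (ℝ × ℝ × ℝ) →ₗ[ℝ] (ℝ × ℝ × ℝ)) ≠ 0 :=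
    (LinearEquiv.isUnit_det' rotEquiv).ne_zero
  set d : ℝ := |(LinearMap.det (rotEquiv : (ℝ × ℝ × ℝ) →ₗ[ℝ] (ℝ × ℝ × ℝ)))⁻¹| with hd
  have hmap : Measure.map rotFun (volume : Measure (ℝ × ℝ × ℝ))
      = ENNReal.ofReal d • volume := by
    have := Measure.map_linearMap_addHaar_eq_smul_addHaar
      (μ := (volume : Measure (ℝ × ℝ × ℝ))) hdet
    exact this
  have hmeas : Measurable rotFun := rot_continuous.measurable
  have h2 : Measure.map rotFun (Measure.map rotFun (volume : Measure (ℝ × ℝ × ℝ))) = volume := by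
    rw [Measure.map_map hmeas hmeas, show rotFun ∘ rotFun = id from funext rotFun_invol,
      Measure.map_id]
  rw [hmap, Measure.map_smul, hmap, smul_smul] at h2
  have hbox : (volume : Measure (ℝ × ℝ × ℝ))
      (Set.Ioo (0:ℝ) 1 ×ˢ (Set.Ioo (0:ℝ) 1 ×ˢ Set.Ioo (0:ℝ) 1)) = 1 := by
    rw [Measure.volume_eq_prod, Measure.prod_prod, Measure.volume_eq_prod, Measure.prod_prod]
    simp [Real.volume_Ioo]
  have hdd : ENNReal.ofReal d * ENNReal.ofReal d = 1 := by
    have := congrArg (fun μ : Measure (ℝ × ℝ × ℝ) =>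
      μ (Set.Ioo (0:ℝ) 1 ×ˢ (Set.Ioo (0:ℝ) 1 ×ˢ Set.Ioo (0:ℝ) 1))) h2
    simpa [Measure.smul_apply, hbox, smul_eq_mul] using this
  have hd1 : d = 1 := by
    rw [← ENNReal.ofReal_mul (abs_nonneg _)] at hdd
    have h := ENNReal.ofReal_eq_one.mp hdd
    nlinarith [abs_nonneg ((LinearMap.det (rotEquiv : (ℝ × ℝ × ℝ) →ₗ[ℝ] (ℝ × ℝ × ℝ)))⁻¹)]
  exact ⟨hmeas, by rw [hmap, hd1]; simp⟩

lemma rot_embedding : MeasurableEmbedding rotFun := by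
  have h : Continuous (Equiv.symm rotEquiv.toEquiv) := rot_continuous
  exact (Homeomorph.mk rotEquiv.toEquiv rot_continuous h).toMeasurableEquiv.measurableEmbedding

lemma gamma_int : ∫ r in Ioi (0:ℝ), r ^ 3 * Real.exp (-r) = 6 := by
  have h := Real.integral_rpow_mul_exp_neg_mul_Ioi (a := 4) (r := 1) (by norm_num) (by norm_num)
  have heq : ∀ t ∈ Ioi (0:ℝ), t ^ ((4:ℝ) - 1) * Real.exp (-(1 * t)) = t ^ 3 * Real.exp (-t) := by
    intro t ht
    rw [show ((4:ℝ) - 1) = ((3:ℕ):ℝ) by norm_num, Real.rpow_natCast]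
    norm_num
  rw [setIntegral_congr_fun measurableSet_Ioi heq] at h
  rw [h, show (4:ℝ) = (3:ℕ) + 1 by norm_num, Real.Gamma_nat_eq_factorial]
  norm_num [Nat.factorial]

lemma gamma_integrable :
    IntegrableOn (fun r : ℝ => r ^ 3 * Real.exp (-r)) (Ioi 0) := by
  have h := Real.GammaIntegral_convergent (s := 4) (by norm_num)
  refine h.congr_fun (fun t ht => ?_) measurableSet_Ioi
  beta_reduce
  rw [show ((4:ℝ) - 1) = ((3:ℕ):ℝ) by norm_num, Real.rpow_natCast]
  ring

lemma anti_deriv (θ : ℝ) :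
    HasDerivAt (fun t => Real.cos t - 2 / 3 * Real.cos t ^ 3)
      (Real.sin θ * Real.cos (2 * θ)) θ := by
  have h1 : HasDerivAt Real.cos (-Real.sin θ) θ := Real.hasDerivAt_cos θ
  have h2 : HasDerivAt (fun t => Real.cos t ^ 3)
      ((3 : ℕ) * Real.cos θ ^ 2 * (-Real.sin θ)) θ := by
    simpa using h1.fun_pow 3
  have h3 := h1.fun_sub (h2.const_mul (2 / 3 : ℝ))
  convert h3 using 1
  case e'_4 => rfl
  case e'_5 => rfl
  rw [Real.cos_two_mul]
  push_cast
  ring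

lemma sincos_cont : Continuous fun θ : ℝ => |Real.sin θ| * |Real.cos (2 * θ)| := by
  fun_prop

lemma sin_cos2_integral (a b : ℝ) :
    ∫ θ in a..b, Real.sin θ * Real.cos (2 * θ)
      = (Real.cos b - 2 / 3 * Real.cos b ^ 3) - (Real.cos a - 2 / 3 * Real.cos a ^ 3) := by
  refine intervalIntegral.integral_eq_sub_of_hasDerivAt (fun θ _ => anti_deriv θ) ?_
  exact (Continuous.mul Real.continuous_sin (Real.continuous_cos.comp (by fun_prop))).intervalIntegrable a b

lemma angular_int :
    ∫ θ in Ioo (-π) π, |Real.sin θ| * |Real.cos (2 * θ)| = (8 * Real.sqrt 2 - 4) / 3 := by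
  have hpi := Real.pi_pos
  have hii : ∀ a b : ℝ, IntervalIntegrable
      (fun θ : ℝ => |Real.sin θ| * |Real.cos (2 * θ)|) volume a b :=
    fun a b => sincos_cont.intervalIntegrable a b
  have hs2 : Real.sqrt 2 ^ 2 = 2 := Real.sq_sqrt (by norm_num)
  have c4 : Real.cos (π / 4) = Real.sqrt 2 / 2 := Real.cos_pi_div_four
  have c34 : Real.cos (3 * π / 4) = -(Real.sqrt 2 / 2) := by
    rw [show (3 * π / 4 : ℝ) = π - π / 4 by ring, Real.cos_pi_sub, Real.cos_pi_div_four]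
  -- interval integral over [0, π]
  have hp4 : ∫ θ in (0:ℝ)..(π/4), |Real.sin θ| * |Real.cos (2 * θ)|
      = Real.sqrt 2 / 3 - 1 / 3 := by
    rw [intervalIntegral.integral_congr (g := fun θ => Real.sin θ * Real.cos (2 * θ))
      (fun θ hθ => ?_), sin_cos2_integral, c4, Real.cos_zero]
    · linear_combination (-(Real.sqrt 2)/12) * hs2
    · rw [uIcc_of_le (by positivity)] at hθ
      have hs : 0 ≤ Real.sin θ := Real.sin_nonneg_of_nonneg_of_le_pi hθ.1 (by linarith [hθ.2])
      have hc : 0 ≤ Real.cos (2 * θ) :=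
        Real.cos_nonneg_of_mem_Icc ⟨by linarith [hθ.1], by linarith [hθ.2]⟩
      simp [abs_of_nonneg hs, abs_of_nonneg hc]
  have hp5 : ∫ θ in (π/4:ℝ)..(3*π/4), |Real.sin θ| * |Real.cos (2 * θ)|
      = 2 * Real.sqrt 2 / 3 := by
    rw [intervalIntegral.integral_congr (g := fun θ => -(Real.sin θ * Real.cos (2 * θ)))
      (fun θ hθ => ?_), intervalIntegral.integral_neg, sin_cos2_integral, c4, c34]
    · linear_combination (-(Real.sqrt 2)/6) * hs2
    · rw [uIcc_of_le (by linarith)] at hθ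
      have hs : 0 ≤ Real.sin θ :=
        Real.sin_nonneg_of_nonneg_of_le_pi (by linarith [hθ.1]) (by linarith [hθ.2])
      have hc : Real.cos (2 * θ) ≤ 0 :=
        Real.cos_nonpos_of_pi_div_two_le_of_le (by linarith [hθ.1]) (by linarith [hθ.2])
      simp only [abs_of_nonneg hs, abs_of_nonpos hc]
      ring
  have hp6 : ∫ θ in (3*π/4:ℝ)..π, |Real.sin θ| * |Real.cos (2 * θ)|
      = Real.sqrt 2 / 3 - 1 / 3 := by
    rw [intervalIntegral.integral_congr (g := fun θ => Real.sin θ * Real.cos (2 * θ))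
      (fun θ hθ => ?_), sin_cos2_integral, c34, Real.cos_pi]
    · linear_combination (-(Real.sqrt 2)/12) * hs2
    · rw [uIcc_of_le (by linarith)] at hθ
      have hs : 0 ≤ Real.sin θ :=
        Real.sin_nonneg_of_nonneg_of_le_pi (by linarith [hθ.1]) hθ.2
      have hc : 0 ≤ Real.cos (2 * θ) := by
        rw [← Real.cos_sub_two_pi]
        exact Real.cos_nonneg_of_mem_Icc ⟨by linarith [hθ.1], by linarith [hθ.2]⟩
      simp [abs_of_nonneg hs, abs_of_nonneg hc]
  have h0pi : ∫ θ in (0:ℝ)..π, |Real.sin θ| * |Real.cos (2 * θ)|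
      = (4 * Real.sqrt 2 - 2) / 3 := by
    rw [← intervalIntegral.integral_add_adjacent_intervals (a := (0:ℝ)) (b := π/4) (c := π)
      (hii _ _) (hii _ _),
      ← intervalIntegral.integral_add_adjacent_intervals (a := (π/4:ℝ)) (b := 3*π/4) (c := π)
      (hii _ _) (hii _ _), hp4, hp5, hp6]
    ring
  have hsym : ∫ θ in (-π:ℝ)..0, |Real.sin θ| * |Real.cos (2 * θ)|
      = ∫ θ in (0:ℝ)..π, |Real.sin θ| * |Real.cos (2 * θ)| := by
    have h := intervalIntegral.integral_comp_neg (a := (0:ℝ)) (b := π)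
      (f := fun θ : ℝ => |Real.sin θ| * |Real.cos (2 * θ)|)
    simp only [neg_zero] at h
    rw [← h]
    refine intervalIntegral.integral_congr (fun θ _ => ?_)
    rw [show (2:ℝ) * -θ = -(2*θ) by ring]
    simp [Real.sin_neg, Real.cos_neg]
  rw [← integral_Ioc_eq_integral_Ioo, ← intervalIntegral.integral_of_le (by linarith),
    ← intervalIntegral.integral_add_adjacent_intervals (a := (-π:ℝ)) (b := 0) (c := π)
      (hii _ _) (hii _ _), hsym, h0pi]
  ring

noncomputable def Gfun (u s : ℝ) : ℝ :=
  |u ^ 2 - s ^ 2| *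
    (1 / (4 * π) * Real.exp (-Real.sqrt (u ^ 2 + s ^ 2)) / Real.sqrt (u ^ 2 + s ^ 2))

noncomputable def Ffun (p : ℝ × ℝ × ℝ) : ℝ :=
  |p.1 ^ 2 - p.2.2 ^ 2 - p.2.1 ^ 2| *
    (1 / (4 * π) * Real.exp (-Real.sqrt (p.1 ^ 2 + p.2.1 ^ 2 + p.2.2 ^ 2)) /
      Real.sqrt (p.1 ^ 2 + p.2.1 ^ 2 + p.2.2 ^ 2))

noncomputable def Hfun (p : ℝ × ℝ) : ℝ := |p.2| * Gfun p.1 p.2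

lemma Ffun_nonneg (p : ℝ × ℝ × ℝ) : 0 ≤ Ffun p := by
  unfold Ffun
  have := Real.pi_pos
  positivity

lemma Ffun_meas : Measurable Ffun := by unfold Ffun; fun_prop

lemma Fsymm (u : ℝ) (q : ℝ × ℝ) : Ffun (u, polarCoord.symm q) = Gfun u q.1 := by
  have h := Real.sin_sq_add_cos_sq q.2
  simp only [Ffun, Gfun, polarCoord_symm_apply]
  rw [show u ^ 2 - (q.1 * Real.sin q.2) ^ 2 - (q.1 * Real.cos q.2) ^ 2 = u ^ 2 - q.1 ^ 2 by
        linear_combination (-q.1 ^ 2) * h,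
      show u ^ 2 + (q.1 * Real.cos q.2) ^ 2 + (q.1 * Real.sin q.2) ^ 2 = u ^ 2 + q.1 ^ 2 by
        linear_combination q.1 ^ 2 * h]

lemma Gfun_abs (u s : ℝ) : Gfun u |s| = Gfun u s := by unfold Gfun; rw [sq_abs]

lemma Hpolar (p : ℝ × ℝ) (hp : p ∈ Ioi (0:ℝ) ×ˢ Ioo (-π) π) :
    p.1 • Hfun (polarCoord.symm p)
      = (1 / (4 * π) * (p.1 ^ 3 * Real.exp (-p.1))) *
          (|Real.sin p.2| * |Real.cos (2 * p.2)|) := by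
  have hr : (0:ℝ) < p.1 := hp.1
  have h1 : (p.1 * Real.cos p.2) ^ 2 + (p.1 * Real.sin p.2) ^ 2 = p.1 ^ 2 := by
    linear_combination p.1 ^ 2 * Real.sin_sq_add_cos_sq p.2
  have h2 : (p.1 * Real.cos p.2) ^ 2 - (p.1 * Real.sin p.2) ^ 2
      = p.1 ^ 2 * Real.cos (2 * p.2) := by
    linear_combination (-p.1 ^ 2) * Real.sin_sq_add_cos_sq p.2
      + (-p.1 ^ 2) * Real.cos_two_mul p.2
  simp only [Hfun, Gfun, polarCoord_symm_apply, smul_eq_mul]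
  rw [h1, h2, Real.sqrt_sq hr.le, abs_mul, abs_mul, abs_of_pos hr,
    abs_of_nonneg (sq_nonneg p.1)]
  field_simp

lemma Hfun_integrable : Integrable Hfun := by
  rw [integrable_comp_polarCoord_symm_iff]
  have hprod : IntegrableOn
      (fun p : ℝ × ℝ => (1 / (4 * π) * (p.1 ^ 3 * Real.exp (-p.1))) *
        (|Real.sin p.2| * |Real.cos (2 * p.2)|)) (Ioi 0 ×ˢ Ioo (-π) π) := by
    rw [IntegrableOn, Measure.volume_eq_prod, ← Measure.prod_restrict]
    exact (gamma_integrable.const_mul _).mul_prod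
      ((sincos_cont.integrableOn_Icc (a := -π) (b := π)).mono_set Ioo_subset_Icc_self)
  rw [show polarCoord.target = Ioi (0:ℝ) ×ˢ Ioo (-π) π from rfl]
  exact hprod.congr_fun (fun p hp => (Hpolar p hp).symm)
    (measurableSet_Ioi.prod measurableSet_Ioo)

lemma slice_int (u : ℝ) : (∫ q : ℝ × ℝ, Ffun (u, q)) = π * ∫ s : ℝ, Hfun (u, s) := by
  have h1 : (∫ q : ℝ × ℝ, Ffun (u, q))
      = ∫ p in polarCoord.target, p.1 • Ffun (u, polarCoord.symm p) :=
    (integral_comp_polarCoord_symm (fun q => Ffun (u, q))).symm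
  have h2 : (∫ p in polarCoord.target, p.1 • Ffun (u, polarCoord.symm p))
      = ∫ p in Ioi (0:ℝ) ×ˢ Ioo (-π) π,
          (fun s => s * Gfun u s) p.1 * (fun _ : ℝ => (1:ℝ)) p.2 := by
    rw [show polarCoord.target = Ioi (0:ℝ) ×ˢ Ioo (-π) π from rfl]
    refine setIntegral_congr_fun (measurableSet_Ioi.prod measurableSet_Ioo) (fun p hp => ?_)
    simp only [smul_eq_mul, Fsymm, mul_one]
  have h3 : (∫ p in Ioi (0:ℝ) ×ˢ Ioo (-π) π,
        (fun s => s * Gfun u s) p.1 * (fun _ : ℝ => (1:ℝ)) p.2)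
      = (∫ s in Ioi (0:ℝ), s * Gfun u s) * ∫ _ in Ioo (-π) π, (1:ℝ) := by
    rw [Measure.volume_eq_prod]
    exact setIntegral_prod_mul (fun s => s * Gfun u s) (fun _ : ℝ => (1:ℝ)) _ _
  have h4 : (∫ _ in Ioo (-π:ℝ) π, (1:ℝ)) = 2 * π := by
    simp only [setIntegral_const, smul_eq_mul, mul_one, Real.volume_Ioo]
    rw [Real.volume_real_Ioo_of_le (by linarith [Real.pi_pos])]
    ring
  have h5 : (∫ s : ℝ, Hfun (u, s)) = 2 * ∫ s in Ioi (0:ℝ), s * Gfun u s := by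
    have heq : (fun s : ℝ => Hfun (u, s)) = fun s : ℝ => (fun t => t * Gfun u t) |s| := by
      funext s
      simp only [Hfun]
      rw [Gfun_abs]
    rw [heq]
    exact _root_.integral_comp_abs (f := fun t => t * Gfun u t)
  rw [h1, h2, h3, h4, h5]
  ring

lemma Ffun_integrable :
    Integrable Ffun ((volume : Measure ℝ).prod (volume : Measure (ℝ × ℝ))) := by
  have hm : AEStronglyMeasurable Ffun ((volume : Measure ℝ).prod (volume : Measure (ℝ × ℝ))) := by
    rw [← Measure.volume_eq_prod]
    exact Ffun_meas.aestronglyMeasurable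
  have hH : Integrable Hfun ((volume : Measure ℝ).prod (volume : Measure ℝ)) := by
    rw [← Measure.volume_eq_prod]; exact Hfun_integrable
  refine (integrable_prod_iff hm).mpr ⟨?_, ?_⟩
  · filter_upwards [hH.prod_right_ae] with u hu
    rw [integrable_comp_polarCoord_symm_iff]
    have h2 : IntegrableOn (fun s => s * Gfun u s) (Ioi 0) :=
      (hu.integrableOn).congr_fun (fun s hs => by
        simp only [Hfun]
        rw [abs_of_pos hs]) measurableSet_Ioi
    have h3 : IntegrableOn (fun p : ℝ × ℝ => (fun s => s * Gfun u s) p.1 * (fun _ => (1:ℝ)) p.2)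
        (Ioi 0 ×ˢ Ioo (-π) π) := by
      rw [IntegrableOn, Measure.volume_eq_prod, ← Measure.prod_restrict]
      refine h2.mul_prod ((integrableOn_const_iff (C := (1:ℝ))).mpr (Or.inr ?_))
      simp [Real.volume_Ioo]
    rw [show polarCoord.target = Ioi (0:ℝ) ×ˢ Ioo (-π) π from rfl]
    refine h3.congr_fun (fun p hp => ?_) (measurableSet_Ioi.prod measurableSet_Ioo)
    simp only [smul_eq_mul, Fsymm, mul_one]
  · have hnn : ∀ q : ℝ × (ℝ × ℝ), ‖Ffun q‖ = Ffun q :=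
      fun q => Real.norm_of_nonneg (Ffun_nonneg q)
    have heq : (fun u : ℝ => ∫ q : ℝ × ℝ, ‖Ffun (u, q)‖) = fun u : ℝ => π * ∫ s, Hfun (u, s) := by
      funext u
      simp only [hnn]
      exact slice_int u
    rw [heq]
    exact (hH.integral_prod_left).const_mul π

lemma rot_step :
    (∫ p : ℝ × ℝ × ℝ,
        |2 * p.1 * p.2.2 - p.2.1 ^ 2| *
          (1 / (4 * π) * Real.exp (-Real.sqrt (p.1 ^ 2 + p.2.1 ^ 2 + p.2.2 ^ 2)) /
            Real.sqrt (p.1 ^ 2 + p.2.1 ^ 2 + p.2.2 ^ 2)))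
      = ∫ p : ℝ × ℝ × ℝ, Ffun p := by
  rw [← rot_measurePreserving.integral_comp rot_embedding
    (fun p : ℝ × ℝ × ℝ =>
      |2 * p.1 * p.2.2 - p.2.1 ^ 2| *
        (1 / (4 * π) * Real.exp (-Real.sqrt (p.1 ^ 2 + p.2.1 ^ 2 + p.2.2 ^ 2)) /
          Real.sqrt (p.1 ^ 2 + p.2.1 ^ 2 + p.2.2 ^ 2)))]
  refine integral_congr_ae (Filter.Eventually.of_forall fun p => ?_)
  have hs2 : Real.sqrt 2 ^ 2 = 2 := Real.sq_sqrt (by norm_num)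
  have hne2 : Real.sqrt 2 ≠ 0 := by positivity
  simp only [rotFun, Ffun]
  rw [show 2 * ((p.1 + p.2.2) / Real.sqrt 2) * ((p.1 - p.2.2) / Real.sqrt 2) - p.2.1 ^ 2
        = p.1 ^ 2 - p.2.2 ^ 2 - p.2.1 ^ 2 by
      rw [mul_assoc, div_mul_div_comm, Real.mul_self_sqrt (by norm_num : (0:ℝ) ≤ 2)]
      ring,
    show ((p.1 + p.2.2) / Real.sqrt 2) ^ 2 + p.2.1 ^ 2 + ((p.1 - p.2.2) / Real.sqrt 2) ^ 2
        = p.1 ^ 2 + p.2.1 ^ 2 + p.2.2 ^ 2 by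
      rw [div_pow, div_pow, hs2]
      ring]

/-- if `(x,y,z)` has joint density
`ρ(x,y,z) = e^{-|(x,y,z)|}/(4π |(x,y,z)|)` on `ℝ³`, then `E|2xz - y²| = 4√2 - 2`. -/
theorem stmt3 :
    ∫ p : ℝ × ℝ × ℝ,
        |2 * p.1 * p.2.2 - p.2.1 ^ 2| *
          (1 / (4 * π) * Real.exp (-Real.sqrt (p.1 ^ 2 + p.2.1 ^ 2 + p.2.2 ^ 2)) /
            Real.sqrt (p.1 ^ 2 + p.2.1 ^ 2 + p.2.2 ^ 2))
      = 4 * Real.sqrt 2 - 2 := by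
  have hH : Integrable Hfun ((volume : Measure ℝ).prod (volume : Measure ℝ)) := by
    rw [← Measure.volume_eq_prod]; exact Hfun_integrable
  rw [rot_step, Measure.volume_eq_prod, integral_prod _ Ffun_integrable]
  simp only [slice_int]
  rw [integral_const_mul, ← integral_prod _ hH, ← Measure.volume_eq_prod,
    ← integral_comp_polarCoord_symm Hfun,
    show polarCoord.target = Ioi (0:ℝ) ×ˢ Ioo (-π) π from rfl,
    setIntegral_congr_fun (measurableSet_Ioi.prod measurableSet_Ioo)
      (fun p hp => Hpolar p hp),
    Measure.volume_eq_prod,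
    setIntegral_prod_mul (fun r : ℝ => 1 / (4 * π) * (r ^ 3 * Real.exp (-r)))
      (fun θ : ℝ => |Real.sin θ| * |Real.cos (2 * θ)|) _ _,
    integral_const_mul, gamma_int, angular_int]
  have hne : (π : ℝ) ≠ 0 := Real.pi_ne_zero
  field_simp
  ring
end

section
/- Let v⁽¹⁾, …, v⁽ⁿ⁻¹⁾ be independent random vectors in ℝ^{2n−3}, each with independent centered Gaussian entries v_j ~ N(0, C(2n−4, j−1)) for j = 1, …, 2n−3, and let Ĵ_n be the (2n−2)×(2n−2) matrix whose (2i−1)-th and (2i)-th columns are (v⁽ⁱ⁾, 0) and (0, v⁽ⁱ⁾) (the vector v⁽ⁱ⁾ shifted down by one). Then E[det Ĵ_n] = (n−1)! · ∏_{k=1}^{n−1} C(2n−4, 2k−2). -/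
open MeasureTheory ProbabilityTheory Finset
open scoped NNReal ENNReal

/-- The `(2n-2) × (2n-2)` structured matrix `Ĵ_n`: for `i = 0,…,n-2`, its
`(2i)`-th column is the vector `v i` (in rows `0,…,2n-4`) and its `(2i+1)`-th
column is the vector `v i` shifted down by one row; other entries are zero.
(0-indexed version of the matrix of the paper.) -/
def hatJ {R : Type*} [Zero R] (n : ℕ) (v : Fin (n - 1) → Fin (2 * n - 3) → R) :
    Matrix (Fin (2 * n - 2)) (Fin (2 * n - 2)) R :=
  Matrix.of fun p q =>
    if q.val % 2 = 0 then
      if hp : p.val < 2 * n - 3 then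
        v ⟨q.val / 2, by have := q.isLt; omega⟩ ⟨p.val, hp⟩
      else 0
    else
      if hp : 0 < p.val then
        v ⟨q.val / 2, by have := q.isLt; omega⟩
          ⟨p.val - 1, by have := p.isLt; omega⟩
      else 0

section GaussMoments

open Real

variable {V : ℝ≥0}

lemma stmt8_pdf_eq (V : ℝ≥0) (x : ℝ) :
    gaussianPDFReal 0 V x
      = (Real.sqrt (2 * π * (V : ℝ)))⁻¹ * Real.exp (-(2 * (V : ℝ))⁻¹ * x ^ 2) := by
  have h : -(x - 0) ^ 2 / (2 * (V : ℝ)) = -(2 * (V : ℝ))⁻¹ * x ^ 2 := by ring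
  rw [gaussianPDFReal, h]

lemma stmt8_integrable_mul_pdf (hV : V ≠ 0) :
    Integrable (fun x => x * gaussianPDFReal 0 V x) := by
  have hV' : 0 < (V : ℝ) := by exact_mod_cast pos_iff_ne_zero.mpr hV
  have hb : 0 < (2 * (V : ℝ))⁻¹ := by positivity
  have h := (integrable_mul_exp_neg_mul_sq hb).const_mul ((Real.sqrt (2 * π * (V : ℝ)))⁻¹)
  refine h.congr (ae_of_all _ fun x => ?_)
  show (Real.sqrt (2 * π * (V : ℝ)))⁻¹ * (x * Real.exp (-(2 * (V : ℝ))⁻¹ * x ^ 2))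
      = x * gaussianPDFReal 0 V x
  rw [stmt8_pdf_eq]; ring

lemma stmt8_integrable_sq_mul_pdf (hV : V ≠ 0) :
    Integrable (fun x => x ^ 2 * gaussianPDFReal 0 V x) := by
  have hV' : 0 < (V : ℝ) := by exact_mod_cast pos_iff_ne_zero.mpr hV
  have hb : 0 < (2 * (V : ℝ))⁻¹ := by positivity
  have hrp : ∀ y : ℝ, y ^ ((2 : ℝ)) = y ^ (2 : ℕ) := fun y => by
    rw [show ((2 : ℝ)) = ((2 : ℕ) : ℝ) by norm_num, Real.rpow_natCast]
  have h := (integrable_rpow_mul_exp_neg_mul_sq hb (s := 2) (by norm_num)).const_mul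
    ((Real.sqrt (2 * π * (V : ℝ)))⁻¹)
  refine h.congr (ae_of_all _ fun x => ?_)
  show (Real.sqrt (2 * π * (V : ℝ)))⁻¹ * (x ^ ((2:ℝ)) * Real.exp (-(2 * (V : ℝ))⁻¹ * x ^ 2))
      = x ^ 2 * gaussianPDFReal 0 V x
  rw [hrp x, stmt8_pdf_eq]; ring

lemma stmt8_integral_mul_pdf (hV : V ≠ 0) :
    ∫ x, x * gaussianPDFReal 0 V x = 0 := by
  have h := MeasureTheory.integral_neg_eq_self (fun x => x * gaussianPDFReal 0 V x) volume
  have heq : ∀ x : ℝ, (-x) * gaussianPDFReal 0 V (-x) = -(x * gaussianPDFReal 0 V x) := by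
    intro x; simp only [stmt8_pdf_eq, neg_sq]; ring
  simp only [heq] at h
  rw [integral_neg] at h
  linarith

lemma stmt8_integral_sq_mul_pdf (hV : V ≠ 0) :
    ∫ x, x ^ 2 * gaussianPDFReal 0 V x = (V : ℝ) := by
  have hV' : 0 < (V : ℝ) := by exact_mod_cast pos_iff_ne_zero.mpr hV
  set s : ℝ := (V : ℝ) with hsdef
  have hs : 0 < s := hV'
  have hb : 0 < (2 * s)⁻¹ := by positivity
  have hrp : ∀ y : ℝ, y ^ ((2 : ℝ)) = y ^ (2 : ℕ) := fun y => by
    rw [show ((2 : ℝ)) = ((2 : ℕ) : ℝ) by norm_num, Real.rpow_natCast]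
  have h1 : ∫ x, x ^ 2 * gaussianPDFReal 0 V x
      = (Real.sqrt (2 * π * s))⁻¹ * ∫ x, x ^ 2 * rexp (-(2 * s)⁻¹ * x ^ 2) := by
    rw [← integral_const_mul]
    congr 1; funext x
    rw [stmt8_pdf_eq]; ring
  have h2 : ∫ x : ℝ, x ^ 2 * rexp (-(2 * s)⁻¹ * x ^ 2)
      = 2 * ∫ x in Set.Ioi (0 : ℝ), x ^ 2 * rexp (-(2 * s)⁻¹ * x ^ 2) := by
    rw [← integral_comp_abs (f := fun x => x ^ 2 * rexp (-(2 * s)⁻¹ * x ^ 2))]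
    congr 1; funext x; rw [sq_abs]
  have h3 : ∫ x in Set.Ioi (0 : ℝ), x ^ 2 * rexp (-(2 * s)⁻¹ * x ^ 2)
      = (2 * s)⁻¹ ^ (-(3 : ℝ) / 2) * (1 / 2) * Real.Gamma (3 / 2) := by
    have hf := integral_rpow_mul_exp_neg_mul_rpow (p := 2) (q := 2) two_pos (by norm_num) hb
    have hcong : ∫ x in Set.Ioi (0 : ℝ), x ^ 2 * rexp (-(2 * s)⁻¹ * x ^ 2)
        = ∫ x in Set.Ioi (0 : ℝ), x ^ ((2 : ℝ)) * rexp (-(2 * s)⁻¹ * x ^ ((2 : ℝ))) :=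
      setIntegral_congr_fun measurableSet_Ioi (fun x _ => by simp only [hrp])
    rw [hcong, hf]
    norm_num
  have hGamma : Real.Gamma (3 / 2) = (1 / 2) * Real.sqrt π := by
    rw [show (3 : ℝ) / 2 = 1 / 2 + 1 by norm_num,
      Real.Gamma_add_one (by norm_num), Real.Gamma_one_half_eq]
  have hbp : ((2 * s)⁻¹ : ℝ) ^ (-(3 : ℝ) / 2) = (2 * s) * Real.sqrt (2 * s) := by
    rw [Real.inv_rpow (by positivity), show (-(3 : ℝ) / 2) = -((3 : ℝ) / 2) by norm_num,
      Real.rpow_neg (by positivity), inv_inv,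
      show ((3 : ℝ) / 2) = 1 + 1 / 2 by norm_num,
      Real.rpow_add (by positivity), Real.rpow_one, ← Real.sqrt_eq_rpow]
  have hsq : Real.sqrt (2 * π * s) = Real.sqrt (2 * s) * Real.sqrt π := by
    rw [show 2 * π * s = (2 * s) * π by ring, Real.sqrt_mul (by positivity)]
  rw [h1, h2, h3, hGamma, hbp, hsq]
  have hA : Real.sqrt (2 * s) * Real.sqrt (2 * s) = 2 * s :=
    Real.mul_self_sqrt (by positivity)
  have hApos : 0 < Real.sqrt (2 * s) := Real.sqrt_pos.mpr (by positivity)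
  have hBpos : 0 < Real.sqrt π := Real.sqrt_pos.mpr Real.pi_pos
  have hAne := hApos.ne'
  have hBne := hBpos.ne'
  field_simp

lemma stmt8_integral_fun_gaussianReal (hV : V ≠ 0) (g : ℝ → ℝ) :
    ∫ x, g x ∂(gaussianReal 0 V) = ∫ x, g x * gaussianPDFReal 0 V x := by
  rw [gaussianReal_of_var_ne_zero _ hV]
  have hm : Measurable fun x => Real.toNNReal (gaussianPDFReal 0 V x) :=
    (measurable_gaussianPDFReal 0 V).real_toNNReal
  calc ∫ x, g x ∂(volume.withDensity (gaussianPDF 0 V))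
      = ∫ x, Real.toNNReal (gaussianPDFReal 0 V x) • g x :=
        integral_withDensity_eq_integral_smul hm g
    _ = ∫ x, g x * gaussianPDFReal 0 V x := by
        congr 1; funext x
        rw [NNReal.smul_def, smul_eq_mul,
          Real.coe_toNNReal _ (gaussianPDFReal_nonneg 0 V x), mul_comm]

lemma stmt8_integrable_fun_gaussianReal (hV : V ≠ 0) (g : ℝ → ℝ)
    (hg : Integrable (fun x => g x * gaussianPDFReal 0 V x)) :
    Integrable g (gaussianReal 0 V) := by
  rw [gaussianReal_of_var_ne_zero _ hV]
  refine (integrable_withDensity_iff (measurable_gaussianPDF 0 V)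
    (ae_of_all _ fun x => ?_)).2 ?_
  · exact ENNReal.ofReal_lt_top
  · refine hg.congr (ae_of_all _ fun x => ?_)
    simp [gaussianPDF, ENNReal.toReal_ofReal (gaussianPDFReal_nonneg 0 V x)]

lemma stmt8_integrable_id_gaussianReal (V : ℝ≥0) :
    Integrable (fun x : ℝ => x) (gaussianReal 0 V) := by
  by_cases hV : V = 0
  · subst hV
    rw [gaussianReal_zero_var]
    exact (integrable_const ((0:ℝ))).congr (ae_eq_dirac (fun x : ℝ => x)).symm
  · exact stmt8_integrable_fun_gaussianReal hV _ (stmt8_integrable_mul_pdf hV)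

lemma stmt8_integrable_sq_gaussianReal (V : ℝ≥0) :
    Integrable (fun x : ℝ => x ^ 2) (gaussianReal 0 V) := by
  by_cases hV : V = 0
  · subst hV
    rw [gaussianReal_zero_var]
    exact (integrable_const (((0:ℝ)) ^ 2)).congr (ae_eq_dirac (fun x : ℝ => x ^ 2)).symm
  · exact stmt8_integrable_fun_gaussianReal hV _ (stmt8_integrable_sq_mul_pdf hV)

lemma stmt8_integral_id_gaussianReal (V : ℝ≥0) :
    ∫ x, x ∂(gaussianReal 0 V) = 0 := by
  by_cases hV : V = 0
  · subst hV
    rw [gaussianReal_zero_var, integral_dirac]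
  · rw [stmt8_integral_fun_gaussianReal hV (fun x => x), stmt8_integral_mul_pdf hV]

lemma stmt8_integral_sq_gaussianReal (V : ℝ≥0) :
    ∫ x, x ^ 2 ∂(gaussianReal 0 V) = (V : ℝ) := by
  by_cases hV : V = 0
  · subst hV
    rw [gaussianReal_zero_var, integral_dirac]
    norm_num
  · rw [stmt8_integral_fun_gaussianReal hV (fun x => x ^ 2), stmt8_integral_sq_mul_pdf hV]

end GaussMoments

section PermMachinery

def stmt8_col0 {n : ℕ} (i : Fin (n - 1)) : Fin (2 * n - 2) :=
  ⟨2 * i.val, by have := i.isLt; omega⟩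

def stmt8_col1 {n : ℕ} (i : Fin (n - 1)) : Fin (2 * n - 2) :=
  ⟨2 * i.val + 1, by have := i.isLt; omega⟩

def stmt8_pairEquiv (n : ℕ) : (Fin (n - 1) × Fin 2) ≃ Fin (2 * n - 2) where
  toFun p := ⟨2 * p.1.val + p.2.val, by have h1 := p.1.isLt; have h2 := p.2.isLt; omega⟩
  invFun q := (⟨q.val / 2, by have := q.isLt; omega⟩, ⟨q.val % 2, by omega⟩)
  left_inv := by
    rintro ⟨⟨i, hi⟩, ⟨b, hb⟩⟩
    refine Prod.ext (Fin.ext ?_) (Fin.ext ?_)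
    · show (2 * i + b) / 2 = i; omega
    · show (2 * i + b) % 2 = b; omega
  right_inv := by
    intro q
    apply Fin.ext
    show 2 * (q.val / 2) + q.val % 2 = q.val
    omega

def stmt8_block {n : ℕ} (π : Equiv.Perm (Fin (n - 1))) : Equiv.Perm (Fin (2 * n - 2)) :=
  (stmt8_pairEquiv n).permCongr (Equiv.prodCongrLeft fun _ : Fin 2 => π)

lemma stmt8_block_val {n : ℕ} (π : Equiv.Perm (Fin (n - 1))) (q : Fin (2 * n - 2))
    (pf : q.val / 2 < n - 1) :
    ((stmt8_block π) q).val = 2 * (π ⟨q.val / 2, pf⟩).val + q.val % 2 := rfl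

lemma stmt8_block_sign {n : ℕ} (π : Equiv.Perm (Fin (n - 1))) :
    Equiv.Perm.sign (stmt8_block π) = 1 := by
  unfold stmt8_block
  rw [Equiv.Perm.sign_permCongr, Equiv.Perm.sign_prodCongrLeft]
  rw [Fin.prod_univ_two]
  exact Int.units_mul_self _

lemma stmt8_block_inj {n : ℕ} : Function.Injective (stmt8_block (n := n)) := by
  intro π π' h
  unfold stmt8_block at h
  have h1 := (stmt8_pairEquiv n).permCongr.injective h
  apply Equiv.ext
  intro i
  have h3 := congrArg (fun ρ : Equiv.Perm (Fin (n - 1) × Fin 2) => (ρ (i, (0 : Fin 2))).1) h1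
  simpa [Equiv.prodCongrLeft_apply] using h3

lemma stmt8_block_good {n : ℕ} (π : Equiv.Perm (Fin (n - 1))) (i : Fin (n - 1)) :
    ((stmt8_block π) (stmt8_col1 i)).val = ((stmt8_block π) (stmt8_col0 i)).val + 1 := by
  have pf0 : (stmt8_col0 (n := n) i).val / 2 < n - 1 := by
    have := i.isLt; show (2 * i.val) / 2 < n - 1; omega
  have pf1 : (stmt8_col1 (n := n) i).val / 2 < n - 1 := by
    have := i.isLt; show (2 * i.val + 1) / 2 < n - 1; omega
  rw [stmt8_block_val π _ pf0, stmt8_block_val π _ pf1]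
  have e0 : (⟨(stmt8_col0 (n := n) i).val / 2, pf0⟩ : Fin (n - 1)) = i :=
    Fin.ext (show (2 * i.val) / 2 = i.val by omega)
  have e1 : (⟨(stmt8_col1 (n := n) i).val / 2, pf1⟩ : Fin (n - 1)) = i :=
    Fin.ext (show (2 * i.val + 1) / 2 = i.val by omega)
  rw [e0, e1]
  show 2 * (π i).val + (2 * i.val + 1) % 2 = 2 * (π i).val + (2 * i.val) % 2 + 1
  omega

/-- in a perm of `Fin M` (`M` even) such that odd positions map to successor of
the previous even position's image, images of even positions are even. -/
lemma stmt8_even_of_good {M : ℕ} (hM : M % 2 = 0) (σ : Equiv.Perm (Fin M))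
    (hg : ∀ q : Fin M, q.val % 2 = 1 →
      (σ q).val = (σ ⟨q.val - 1, lt_of_le_of_lt (Nat.sub_le _ _) q.isLt⟩).val + 1) :
    ∀ q : Fin M, q.val % 2 = 0 → (σ q).val % 2 = 0 := by
  suffices H : ∀ r : ℕ, ∀ q : Fin M, (σ q).val = r → q.val % 2 = 0 → r % 2 = 0 by
    intro q hq
    exact H (σ q).val q rfl hq
  intro r
  induction r using Nat.strong_induction_on with
  | _ r ih =>
    intro q hq hq0
    by_contra hodd
    have hr1 : r % 2 = 1 := by omega
    have hrM : r < M := by rw [← hq]; exact (σ q).isLt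
    have hr0 : 0 < r := by omega
    set q' : Fin M := σ.symm ⟨r - 1, by omega⟩ with hq'def
    have hσq' : (σ q').val = r - 1 := by rw [hq'def, Equiv.apply_symm_apply]
    by_cases hpar : q'.val % 2 = 1
    · have h1 := hg q' hpar
      rw [hσq'] at h1
      have h2 : (σ ⟨q'.val - 1, lt_of_le_of_lt (Nat.sub_le _ _) q'.isLt⟩).val = r - 2 := by
        omega
      have h3 : (q'.val - 1) % 2 = 0 := by omega
      have h4 := ih (r - 2) (by omega) _ h2 h3
      omega
    · have hq'1M : q'.val + 1 < M := by
        have := q'.isLt; omega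
      have h1 := hg ⟨q'.val + 1, hq'1M⟩ (show (q'.val + 1) % 2 = 1 by omega)
      have hq'' : (⟨(⟨q'.val + 1, hq'1M⟩ : Fin M).val - 1,
          lt_of_le_of_lt (Nat.sub_le _ _) (⟨q'.val + 1, hq'1M⟩ : Fin M).isLt⟩ : Fin M) = q' :=
        Fin.ext (show q'.val + 1 - 1 = q'.val by omega)
      rw [hq'', hσq'] at h1
      have h3 : (⟨q'.val + 1, hq'1M⟩ : Fin M) = q :=
        σ.injective (Fin.ext (show (σ _).val = (σ q).val by omega))
      have h4 : q.val = q'.val + 1 := by rw [← h3]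
      omega

lemma stmt8_good_exists {n : ℕ} (hn : 2 ≤ n) (σ : Equiv.Perm (Fin (2 * n - 2)))
    (hg : ∀ i : Fin (n - 1), (σ (stmt8_col1 i)).val = (σ (stmt8_col0 i)).val + 1) :
    ∃ π : Equiv.Perm (Fin (n - 1)), stmt8_block π = σ := by
  have heven : ∀ q : Fin (2 * n - 2), q.val % 2 = 0 → (σ q).val % 2 = 0 := by
    apply stmt8_even_of_good (by omega)
    intro q hq1
    have hiq : q.val / 2 < n - 1 := by have := q.isLt; omega
    have hc1 : stmt8_col1 ⟨q.val / 2, hiq⟩ = q :=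
      Fin.ext (show 2 * (q.val / 2) + 1 = q.val by omega)
    have hc0 : (⟨q.val - 1, lt_of_le_of_lt (Nat.sub_le _ _) q.isLt⟩ : Fin (2 * n - 2))
        = stmt8_col0 ⟨q.val / 2, hiq⟩ :=
      Fin.ext (show q.val - 1 = 2 * (q.val / 2) by omega)
    have e := hg ⟨q.val / 2, hiq⟩
    rw [hc1] at e
    rw [hc0]
    exact e
  have hb : ∀ i : Fin (n - 1), (σ (stmt8_col0 i)).val / 2 < n - 1 := fun i => by
    have := (σ (stmt8_col0 i)).isLt; omega
  have hp0inj : Function.Injective (fun i => (⟨(σ (stmt8_col0 i)).val / 2, hb i⟩ : Fin (n - 1))) := by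
    intro i i' h
    have he1 : (σ (stmt8_col0 i)).val % 2 = 0 :=
      heven (stmt8_col0 i) (show (2 * i.val) % 2 = 0 by omega)
    have he2 : (σ (stmt8_col0 i')).val % 2 = 0 :=
      heven (stmt8_col0 i') (show (2 * i'.val) % 2 = 0 by omega)
    have hv : (σ (stmt8_col0 i)).val / 2 = (σ (stmt8_col0 i')).val / 2 := congrArg Fin.val h
    have hveq : (σ (stmt8_col0 i)).val = (σ (stmt8_col0 i')).val := by omega
    have := σ.injective (Fin.ext hveq)
    have hvv : (2 : ℕ) * i.val = 2 * i'.val := congrArg Fin.val this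
    exact Fin.ext (by omega)
  let π : Equiv.Perm (Fin (n - 1)) :=
    Equiv.ofBijective _ (Finite.injective_iff_bijective.mp hp0inj)
  refine ⟨π, ?_⟩
  apply Equiv.ext
  intro q
  apply Fin.ext
  have hiq : q.val / 2 < n - 1 := by have := q.isLt; omega
  rw [stmt8_block_val π q hiq]
  have hπ : (π ⟨q.val / 2, hiq⟩).val = (σ (stmt8_col0 ⟨q.val / 2, hiq⟩)).val / 2 := rfl
  by_cases hpar : q.val % 2 = 0
  · have e1 : (σ (stmt8_col0 ⟨q.val / 2, hiq⟩)).val = (σ q).val :=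
      congrArg (fun t => (σ t).val)
        (Fin.ext (show 2 * (q.val / 2) = q.val by omega))
    have e2 := heven q hpar
    omega
  · have e1 : (σ (stmt8_col1 ⟨q.val / 2, hiq⟩)).val = (σ q).val :=
      congrArg (fun t => (σ t).val)
        (Fin.ext (show 2 * (q.val / 2) + 1 = q.val by omega))
    have e2 := hg ⟨q.val / 2, hiq⟩
    have e3 : (σ (stmt8_col0 ⟨q.val / 2, hiq⟩)).val % 2 = 0 :=
      heven (stmt8_col0 ⟨q.val / 2, hiq⟩) (show (2 * (q.val / 2)) % 2 = 0 by omega)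
    omega

end PermMachinery

section IndepMachinery

variable {Ω : Type*} [MeasurableSpace Ω] {μ : Measure Ω}

lemma stmt8_iIndepFun_congr {ι : Type*} {β : Type*} [m : MeasurableSpace β]
    {f g : ι → Ω → β} (hf : iIndepFun f μ) (h : ∀ i, f i =ᵐ[μ] g i) :
    iIndepFun g μ := by
  rw [iIndepFun_iff_measure_inter_preimage_eq_mul] at hf ⊢
  intro S sets hsets
  have hS : ∀ i, i ∈ S → ((g i ⁻¹' sets i : Set Ω) =ᵐ[μ] (f i ⁻¹' sets i : Set Ω)) := by
    intro i _
    filter_upwards [h i] with ω hω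
    show (g i ω ∈ sets i) = (f i ω ∈ sets i)
    rw [hω]
  have hS' : ∀ᵐ ω ∂μ, ∀ i ∈ S, f i ω = g i ω :=
    (ae_ball_iff S.countable_toSet).2 (fun i _ => h i)
  calc μ (⋂ i ∈ S, g i ⁻¹' sets i) = μ (⋂ i ∈ S, f i ⁻¹' sets i) := by
        apply measure_congr
        filter_upwards [hS'] with ω hω
        show (ω ∈ ⋂ i ∈ S, g i ⁻¹' sets i) = (ω ∈ ⋂ i ∈ S, f i ⁻¹' sets i)
        simp only [Set.mem_iInter, Set.mem_preimage]
        apply propext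
        constructor
        · intro hh i hi; rw [hω i hi]; exact hh i hi
        · intro hh i hi; rw [← hω i hi]; exact hh i hi
    _ = ∏ i ∈ S, μ (f i ⁻¹' sets i) := hf S hsets
    _ = ∏ i ∈ S, μ (g i ⁻¹' sets i) :=
        Finset.prod_congr rfl fun i hi => (measure_congr (hS i hi)).symm

lemma stmt8_integral_prod {ι : Type*} [IsProbabilityMeasure μ] (f : ι → Ω → ℝ)
    (hindep : iIndepFun f μ)
    (hmeas : ∀ i, Measurable (f i)) (hint : ∀ i, Integrable (f i) μ) (s : Finset ι) :
    Integrable (fun ω => ∏ i ∈ s, f i ω) μ ∧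
      ∫ ω, ∏ i ∈ s, f i ω ∂μ = ∏ i ∈ s, ∫ ω, f i ω ∂μ := by
  classical
  induction s using Finset.induction_on with
  | empty => exact ⟨by simpa using integrable_const (1 : ℝ), by simp⟩
  | @insert a s ha ih =>
    have hIF : IndepFun (∏ j ∈ s, f j) (f a) μ :=
      hindep.indepFun_finset_prod_of_notMem hmeas ha
    have hXeq : (∏ j ∈ s, f j) = fun ω => ∏ j ∈ s, f j ω := by
      funext ω; exact Finset.prod_apply ω s f
    have hXint : Integrable (∏ j ∈ s, f j) μ := by rw [hXeq]; exact ih.1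
    have hXmeas : AEStronglyMeasurable (∏ j ∈ s, f j) μ := hXint.aestronglyMeasurable
    have hmul : Integrable ((∏ j ∈ s, f j) * f a) μ := hIF.integrable_mul hXint (hint a)
    constructor
    · refine hmul.congr (ae_of_all _ fun ω => ?_)
      show (∏ j ∈ s, f j) ω * f a ω = ∏ i ∈ insert a s, f i ω
      rw [Finset.prod_insert ha, Finset.prod_apply]
      ring
    · have h1 : ∫ ω, ∏ i ∈ insert a s, f i ω ∂μ = ∫ ω, ((∏ j ∈ s, f j) * f a) ω ∂μ := by
        apply integral_congr_ae
        refine ae_of_all _ fun ω => ?_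
        show ∏ i ∈ insert a s, f i ω = (∏ j ∈ s, f j) ω * f a ω
        rw [Finset.prod_insert ha, Finset.prod_apply]
        ring
      rw [h1]
      have h2 := hIF.integral_mul_eq_mul_integral hXmeas (hint a).aestronglyMeasurable
      rw [h2]
      rw [Finset.prod_insert ha, ← ih.2]
      have h3 : ∫ ω, (∏ j ∈ s, f j) ω ∂μ = ∫ ω, ∏ j ∈ s, f j ω ∂μ := by
        apply integral_congr_ae
        exact ae_of_all _ fun ω => by rw [Finset.prod_apply]
      rw [← h3]
      ring

end IndepMachinery

/-- if the entries `v i j` (`i = 1,…,n-1`, `j = 1,…,2n-3`) are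
independent centered Gaussians with variances `C(2n-4, j-1)`, then
`E[det Ĵ_n] = (n-1)! · ∏_{k=1}^{n-1} C(2n-4, 2k-2)`. -/
theorem stmt8 {Ω : Type*} [MeasurableSpace Ω] (μ : Measure Ω) [IsProbabilityMeasure μ]
    (n : ℕ) (hn : 2 ≤ n)
    (v : Fin (n - 1) → Fin (2 * n - 3) → Ω → ℝ)
    (hindep : iIndepFun
      (fun p : Fin (n - 1) × Fin (2 * n - 3) => v p.1 p.2) μ)
    (hgauss : ∀ i j, μ.map (v i j) = gaussianReal 0 (Nat.choose (2 * n - 4) (j : ℕ))) :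
    ∫ ω, (hatJ n (fun i j => v i j ω)).det ∂μ
      = (Nat.factorial (n - 1) : ℝ) *
          ∏ k ∈ Finset.range (n - 1), ((Nat.choose (2 * n - 4) (2 * k) : ℕ) : ℝ) := by
  classical
  -- step 1: measurable modification of `v`
  have haem : ∀ p : Fin (n - 1) × Fin (2 * n - 3), AEMeasurable (v p.1 p.2) μ := by
    intro p
    by_contra h
    have h0 := Measure.map_of_not_aemeasurable h
    rw [hgauss p.1 p.2] at h0
    exact (IsProbabilityMeasure.ne_zero (gaussianReal 0 (Nat.choose (2 * n - 4) (p.2 : ℕ)))) h0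
  let w : Fin (n - 1) × Fin (2 * n - 3) → Ω → ℝ := fun p => (haem p).mk _
  have hwmeas : ∀ p, Measurable (w p) := fun p => (haem p).measurable_mk
  have hae : ∀ p, v p.1 p.2 =ᵐ[μ] w p := fun p => (haem p).ae_eq_mk
  have hwindep : iIndepFun w μ := stmt8_iIndepFun_congr hindep hae
  have hwmap : ∀ p, μ.map (w p) = gaussianReal 0 (Nat.choose (2 * n - 4) (p.2 : ℕ)) := by
    intro p
    rw [← Measure.map_congr (hae p), hgauss]
  -- moments of the `w`'s
  have hInt1 : ∀ p, Integrable (w p) μ := by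
    intro p
    have h1 : Integrable (fun x : ℝ => x) (μ.map (w p)) := by
      rw [hwmap p]; exact stmt8_integrable_id_gaussianReal _
    have := (integrable_map_measure measurable_id.aestronglyMeasurable
      (hwmeas p).aemeasurable).1 h1
    simpa [Function.comp] using this
  have hInt2 : ∀ p, Integrable (fun ω => (w p ω) ^ 2) μ := by
    intro p
    have h1 : Integrable (fun x : ℝ => x ^ 2) (μ.map (w p)) := by
      rw [hwmap p]; exact stmt8_integrable_sq_gaussianReal _
    have := (integrable_map_measure (measurable_id.pow_const 2).aestronglyMeasurable
      (hwmeas p).aemeasurable).1 h1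
    exact this
  have hMean : ∀ p, ∫ ω, w p ω ∂μ = 0 := by
    intro p
    have h1 : ∫ x, (fun x : ℝ => x) x ∂(μ.map (w p)) = ∫ ω, w p ω ∂μ :=
      integral_map (hwmeas p).aemeasurable measurable_id.aestronglyMeasurable
    rw [← h1, hwmap p, stmt8_integral_id_gaussianReal]
  have hVar : ∀ p, ∫ ω, (w p ω) ^ 2 ∂μ = ((Nat.choose (2 * n - 4) (p.2 : ℕ) : ℕ) : ℝ) := by
    intro p
    have h1 : ∫ x, (fun x : ℝ => x ^ 2) x ∂(μ.map (w p)) = ∫ ω, (w p ω) ^ 2 ∂μ :=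
      integral_map (hwmeas p).aemeasurable (measurable_id.pow_const 2).aestronglyMeasurable
    rw [← h1, hwmap p, stmt8_integral_sq_gaussianReal]
    simp
  -- step 2: replace `v` by `w` in the integrand
  have hdet : ∫ ω, (hatJ n (fun i j => v i j ω)).det ∂μ
      = ∫ ω, (hatJ n (fun i j => w (i, j) ω)).det ∂μ := by
    apply integral_congr_ae
    have hall : ∀ᵐ ω ∂μ, ∀ p : Fin (n - 1) × Fin (2 * n - 3), v p.1 p.2 ω = w p ω :=
      ae_all_iff.2 hae
    filter_upwards [hall] with ω hω
    have : (fun i j => v i j ω) = fun i j => w (i, j) ω := by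
      funext i j; exact hω (i, j)
    rw [this]
  rw [hdet]
  -- step 3: the key per-permutation computation
  have key : ∀ σ : Equiv.Perm (Fin (2 * n - 2)),
      Integrable (fun ω => ∏ q : Fin (2 * n - 2),
        (hatJ n fun i j => w (i, j) ω) (σ q) q) μ ∧
      ∫ ω, ∏ q : Fin (2 * n - 2), (hatJ n fun i j => w (i, j) ω) (σ q) q ∂μ
        = if (∀ i : Fin (n - 1), (σ (stmt8_col1 i)).val = (σ (stmt8_col0 i)).val + 1)
          then ∏ i : Fin (n - 1), ((Nat.choose (2 * n - 4) ((σ (stmt8_col0 i)).val) : ℕ) : ℝ)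
          else 0 := by
    intro σ
    by_cases hZ : ∃ q : Fin (2 * n - 2),
        (q.val % 2 = 0 ∧ 2 * n - 3 ≤ (σ q).val) ∨ (q.val % 2 ≠ 0 ∧ (σ q).val = 0)
    · obtain ⟨q0, hq0⟩ := hZ
      have hzero : (fun ω => ∏ q : Fin (2 * n - 2),
          (hatJ n fun i j => w (i, j) ω) (σ q) q) = fun _ => (0 : ℝ) := by
        funext ω
        refine Finset.prod_eq_zero (Finset.mem_univ q0) ?_
        simp only [hatJ, Matrix.of_apply]
        rcases hq0 with ⟨he, hge⟩ | ⟨ho, h0⟩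
        · rw [if_pos he, dif_neg (by omega)]
        · rw [if_neg ho, dif_neg (by omega)]
      rw [hzero]
      refine ⟨integrable_const 0, ?_⟩
      rw [integral_zero]
      rw [if_neg]
      intro hg
      rcases hq0 with ⟨he, hge⟩ | ⟨ho, h0⟩
      · have hiq : q0.val / 2 < n - 1 := by have := q0.isLt; omega
        have e1 : (σ (stmt8_col0 ⟨q0.val / 2, hiq⟩)).val = (σ q0).val :=
          congrArg (fun t => (σ t).val)
            (Fin.ext (show 2 * (q0.val / 2) = q0.val by omega))
        have e2 := hg ⟨q0.val / 2, hiq⟩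
        have e3 := (σ (stmt8_col1 ⟨q0.val / 2, hiq⟩)).isLt
        omega
      · have hiq : q0.val / 2 < n - 1 := by have := q0.isLt; omega
        have e1 : (σ (stmt8_col1 ⟨q0.val / 2, hiq⟩)).val = (σ q0).val :=
          congrArg (fun t => (σ t).val)
            (Fin.ext (show 2 * (q0.val / 2) + 1 = q0.val by omega))
        have e2 := hg ⟨q0.val / 2, hiq⟩
        omega
    · push_neg at hZ
      -- `hZ : ∀ q, (q % 2 = 0 → σ q < 2n-3) ∧ (q % 2 ≠ 0 → σ q ≠ 0)`
      set φ : Fin (2 * n - 2) → Fin (n - 1) × Fin (2 * n - 3) := fun q =>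
        (⟨q.val / 2, by have := q.isLt; omega⟩,
         ⟨min ((σ q).val - q.val % 2) (2 * n - 4),
          lt_of_le_of_lt (min_le_right _ _) (by omega)⟩) with hφdef
      have hφ1 : ∀ q, (φ q).1.val = q.val / 2 := fun q => rfl
      have hφval : ∀ q, ((φ q).2).val = (σ q).val - q.val % 2 := by
        intro q
        show min ((σ q).val - q.val % 2) (2 * n - 4) = _
        have h1 := (hZ q).1
        have h2 := (σ q).isLt
        by_cases hq : q.val % 2 = 0
        · have := h1 hq; omega
        · omega
      have hent : ∀ q ω, (hatJ n fun i j => w (i, j) ω) (σ q) q = w (φ q) ω := by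
        intro q ω
        simp only [hatJ, Matrix.of_apply]
        by_cases hq : q.val % 2 = 0
        · rw [if_pos hq, dif_pos ((hZ q).1 hq)]
          have hpq : φ q = (⟨q.val / 2, by have := q.isLt; omega⟩, ⟨(σ q).val, (hZ q).1 hq⟩) := by
            refine Prod.ext (Fin.ext ?_) (Fin.ext ?_)
            · rfl
            · rw [hφval]
              show (σ q).val - q.val % 2 = (σ q).val
              omega
          rw [hpq]
        · rw [if_neg hq, dif_pos (by have := (hZ q).2 hq; omega)]
          have hpq : φ q = (⟨q.val / 2, by have := q.isLt; omega⟩,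
              ⟨(σ q).val - 1, by have := (σ q).isLt; omega⟩) := by
            refine Prod.ext (Fin.ext ?_) (Fin.ext ?_)
            · rfl
            · rw [hφval]
              show (σ q).val - q.val % 2 = (σ q).val - 1
              omega
          rw [hpq]
      set m : (Fin (n - 1) × Fin (2 * n - 3)) → ℕ :=
        fun p => (univ.filter (fun q => φ q = p)).card with hmdef
      have hprod : ∀ ω, ∏ q : Fin (2 * n - 2), w (φ q) ω
          = ∏ p : Fin (n - 1) × Fin (2 * n - 3), (w p ω) ^ m p := by
        intro ω
        show ∏ q : Fin (2 * n - 2), w (φ q) ω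
          = ∏ p : Fin (n - 1) × Fin (2 * n - 3),
              (w p ω) ^ (univ.filter (fun q => φ q = p)).card
        have hcomp : ∏ q : Fin (2 * n - 2), w (φ q) ω
            = ∏ b ∈ univ.image φ, (w b ω) ^ (univ.filter (fun q => φ q = b)).card :=
          Finset.prod_comp (s := (univ : Finset (Fin (2 * n - 2))))
            (fun p : Fin (n - 1) × Fin (2 * n - 3) => w p ω) φ
        rw [hcomp]
        refine Finset.prod_subset (Finset.subset_univ _) ?_
        intro p _ hp
        have hempty : (univ.filter fun q => φ q = p) = ∅ := by
          refine Finset.filter_eq_empty_iff.mpr ?_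
          intro q _ hq
          exact hp (Finset.mem_image.mpr ⟨q, Finset.mem_univ q, hq⟩)
        show (w p ω) ^ m p = 1
        rw [hmdef]
        simp only [hempty, Finset.card_empty, pow_zero]
      have hm2 : ∀ p, m p ≤ 2 := by
        intro p
        have hsub : (univ.filter (fun q => φ q = p))
            ⊆ {stmt8_col0 p.1, stmt8_col1 p.1} := by
          intro q hq
          rw [Finset.mem_filter] at hq
          have h2 : q.val / 2 = p.1.val := by
            rw [← hφ1 q, hq.2]
          have := q.isLt
          simp only [Finset.mem_insert, Finset.mem_singleton]
          by_cases hqp : q.val % 2 = 0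
          · left; exact Fin.ext (show q.val = 2 * p.1.val by omega)
          · right; exact Fin.ext (show q.val = 2 * p.1.val + 1 by omega)
        calc m p ≤ ({stmt8_col0 p.1, stmt8_col1 p.1} : Finset _).card :=
              Finset.card_le_card hsub
          _ ≤ 2 := by
              refine le_trans (Finset.card_insert_le _ _) ?_
              simp
      have hfam : iIndepFun (fun p ω => (w p ω) ^ m p) μ :=
        hwindep.comp (fun p (x : ℝ) => x ^ m p) (fun p => measurable_id.pow_const (m p))
      have hfmeas : ∀ p, Measurable (fun ω => (w p ω) ^ m p) :=
        fun p => (hwmeas p).pow_const (m p)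
      have hfint : ∀ p, Integrable (fun ω => (w p ω) ^ m p) μ := by
        intro p
        have h3 : m p = 0 ∨ m p = 1 ∨ m p = 2 := by have := hm2 p; omega
        rcases h3 with h | h | h <;> rw [h]
        · simp only [pow_zero]; exact integrable_const 1
        · simp only [pow_one]; exact hInt1 p
        · exact hInt2 p
      obtain ⟨hI, hEq⟩ := stmt8_integral_prod _ hfam hfmeas hfint univ
      constructor
      · refine hI.congr (ae_of_all _ fun ω => ?_)
        exact ((hprod ω).symm.trans
          (Finset.prod_congr rfl fun q _ => (hent q ω).symm))
      · have hIeq : ∫ ω, ∏ q : Fin (2 * n - 2),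
            (hatJ n fun i j => w (i, j) ω) (σ q) q ∂μ
            = ∫ ω, ∏ p : Fin (n - 1) × Fin (2 * n - 3), (w p ω) ^ m p ∂μ := by
          apply integral_congr_ae
          refine ae_of_all _ fun ω => ?_
          exact (Finset.prod_congr rfl fun q _ => hent q ω).trans (hprod ω)
        rw [hIeq, hEq]
        by_cases hg : ∀ i : Fin (n - 1), (σ (stmt8_col1 i)).val = (σ (stmt8_col0 i)).val + 1
        · rw [if_pos hg]
          have hcol0par : ∀ i : Fin (n - 1), (stmt8_col0 (n := n) i).val % 2 = 0 :=
            fun i => show (2 * i.val) % 2 = 0 by omega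
          have hmp : ∀ p, m p = if (p.2).val = (σ (stmt8_col0 p.1)).val then 2 else 0 := by
            intro p
            have hfilt : (univ.filter (fun q => φ q = p))
                = if (p.2).val = (σ (stmt8_col0 p.1)).val
                  then {stmt8_col0 p.1, stmt8_col1 p.1} else ∅ := by
              split_ifs with hc
              · apply Finset.ext
                intro q
                simp only [Finset.mem_filter, Finset.mem_univ, true_and,
                  Finset.mem_insert, Finset.mem_singleton]
                constructor
                · intro hq
                  have h2 : q.val / 2 = p.1.val := by rw [← hφ1 q, hq]
                  have := q.isLt
                  by_cases hqp : q.val % 2 = 0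
                  · left; exact Fin.ext (show q.val = 2 * p.1.val by omega)
                  · right; exact Fin.ext (show q.val = 2 * p.1.val + 1 by omega)
                · rintro (rfl | rfl)
                  · refine Prod.ext (Fin.ext ?_) (Fin.ext ?_)
                    · show (2 * p.1.val) / 2 = p.1.val; omega
                    · rw [hφval]
                      have h4 := hcol0par p.1
                      omega
                  · refine Prod.ext (Fin.ext ?_) (Fin.ext ?_)
                    · show (2 * p.1.val + 1) / 2 = p.1.val; omega
                    · rw [hφval]
                      have h4 := hg p.1
                      have h5 : (stmt8_col1 (n := n) p.1).val % 2 = 1 :=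
                        show (2 * p.1.val + 1) % 2 = 1 by omega
                      omega
              · refine Finset.filter_eq_empty_iff.mpr ?_
                intro q _ hq
                have h1 : q.val / 2 = p.1.val := by rw [← hφ1 q, hq]
                have h2 : (φ q).2.val = p.2.val := congrArg Fin.val (congrArg Prod.snd hq)
                rw [hφval] at h2
                have := q.isLt
                by_cases hqp : q.val % 2 = 0
                · have hq1 : q = stmt8_col0 p.1 :=
                    Fin.ext (show q.val = 2 * p.1.val by omega)
                  have e3 : (σ (stmt8_col0 p.1)).val = (σ q).val :=
                    congrArg (fun t => (σ t).val) hq1.symm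
                  exact hc (by omega)
                · have hq1 : q = stmt8_col1 p.1 :=
                    Fin.ext (show q.val = 2 * p.1.val + 1 by omega)
                  have e3 : (σ (stmt8_col1 p.1)).val = (σ q).val :=
                    congrArg (fun t => (σ t).val) hq1.symm
                  have e4 := hg p.1
                  exact hc (by omega)
            rw [hmdef]
            simp only [hfilt]
            split_ifs with hc
            · rw [Finset.card_insert_of_notMem, Finset.card_singleton]
              simp only [Finset.mem_singleton]
              intro hcc
              have := congrArg Fin.val hcc
              have h5 : (2:ℕ) * p.1.val = 2 * p.1.val + 1 := this
              omega
            · exact Finset.card_empty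
          have hstep1 : ∏ p : Fin (n - 1) × Fin (2 * n - 3), ∫ ω, (w p ω) ^ m p ∂μ
              = ∏ p : Fin (n - 1) × Fin (2 * n - 3),
                  (if (p.2).val = (σ (stmt8_col0 p.1)).val
                   then ((Nat.choose (2 * n - 4) ((p.2).val) : ℕ) : ℝ) else 1) := by
            refine Finset.prod_congr rfl fun p _ => ?_
            rw [hmp p]
            split_ifs with hc
            · exact hVar p
            · simp only [pow_zero]
              rw [integral_const]
              simp
          rw [hstep1, Fintype.prod_prod_type]
          refine Finset.prod_congr rfl fun i _ => ?_
          have hr : (σ (stmt8_col0 i)).val < 2 * n - 3 :=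
            (hZ (stmt8_col0 i)).1 (hcol0par i)
          have hfun : (fun j : Fin (2 * n - 3) =>
              (if (j).val = (σ (stmt8_col0 i)).val
               then ((Nat.choose (2 * n - 4) (j.val) : ℕ) : ℝ) else 1))
              = fun j => (if j = (⟨(σ (stmt8_col0 i)).val, hr⟩ : Fin (2 * n - 3))
                then ((Nat.choose (2 * n - 4) (j.val) : ℕ) : ℝ) else 1) := by
            funext j
            congr 1
            rw [Fin.ext_iff]
          rw [hfun, Finset.prod_ite_eq' univ _
            (fun j : Fin (2 * n - 3) => ((Nat.choose (2 * n - 4) (j.val) : ℕ) : ℝ))]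
          rw [if_pos (Finset.mem_univ _)]
        · rw [if_neg hg]
          push_neg at hg
          obtain ⟨i0, hi0⟩ := hg
          have hr : (σ (stmt8_col0 i0)).val < 2 * n - 3 :=
            (hZ (stmt8_col0 i0)).1 (show (2 * i0.val) % 2 = 0 by omega)
          have hmp0 : m (i0, ⟨(σ (stmt8_col0 i0)).val, hr⟩) = 1 := by
            have hfilt : (univ.filter fun q => φ q = (i0, ⟨(σ (stmt8_col0 i0)).val, hr⟩))
                = {stmt8_col0 i0} := by
              apply Finset.ext
              intro q
              simp only [Finset.mem_filter, Finset.mem_univ, true_and, Finset.mem_singleton]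
              constructor
              · intro hq
                have h1 : q.val / 2 = i0.val := by rw [← hφ1 q, hq]
                have h2 : (φ q).2.val = (σ (stmt8_col0 i0)).val :=
                  congrArg Fin.val (congrArg Prod.snd hq)
                rw [hφval] at h2
                have := q.isLt
                by_cases hqp : q.val % 2 = 0
                · exact Fin.ext (show q.val = 2 * i0.val by omega)
                · exfalso
                  have hq1 : q = stmt8_col1 i0 :=
                    Fin.ext (show q.val = 2 * i0.val + 1 by omega)
                  have e3 : (σ (stmt8_col1 i0)).val = (σ q).val :=
                    congrArg (fun t => (σ t).val) hq1.symm
                  have e4 : (σ q).val ≠ 0 := (hZ q).2 hqp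
                  omega
              · rintro rfl
                refine Prod.ext (Fin.ext ?_) (Fin.ext ?_)
                · show (2 * i0.val) / 2 = i0.val; omega
                · rw [hφval]
                  show (σ (stmt8_col0 i0)).val - (stmt8_col0 i0).val % 2
                    = (σ (stmt8_col0 i0)).val
                  have h4 : (stmt8_col0 (n := n) i0).val % 2 = 0 :=
                    show (2 * i0.val) % 2 = 0 by omega
                  omega
            rw [hmdef]
            simp only [hfilt, Finset.card_singleton]
          refine Finset.prod_eq_zero (Finset.mem_univ (i0, ⟨(σ (stmt8_col0 i0)).val, hr⟩)) ?_
          simp only [hmp0, pow_one]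
          exact hMean _
  -- step 4: expand the determinant and swap sum and integral
  have hdet2 : ∀ ω : Ω, (hatJ n fun i j => w (i, j) ω).det
      = ∑ σ : Equiv.Perm (Fin (2 * n - 2)),
          ((Equiv.Perm.sign σ : ℤ) : ℝ) *
            ∏ q : Fin (2 * n - 2), (hatJ n fun i j => w (i, j) ω) (σ q) q :=
    fun ω => Matrix.det_apply' _
  simp_rw [hdet2]
  rw [integral_finset_sum _ (fun σ _ => ((key σ).1.const_mul _))]
  have hterm : ∀ σ ∈ (univ : Finset (Equiv.Perm (Fin (2 * n - 2)))),
      (∫ ω, ((Equiv.Perm.sign σ : ℤ) : ℝ) *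
          ∏ q : Fin (2 * n - 2), (hatJ n fun i j => w (i, j) ω) (σ q) q ∂μ)
        = ((Equiv.Perm.sign σ : ℤ) : ℝ) *
          (if (∀ i : Fin (n - 1), (σ (stmt8_col1 i)).val = (σ (stmt8_col0 i)).val + 1)
           then ∏ i : Fin (n - 1), ((Nat.choose (2 * n - 4) ((σ (stmt8_col0 i)).val) : ℕ) : ℝ)
           else 0) := by
    intro σ _
    rw [integral_const_mul, (key σ).2]
  rw [Finset.sum_congr rfl hterm]
  -- step 5: evaluate the sum over permutations
  have hsum1 : ∑ σ : Equiv.Perm (Fin (2 * n - 2)),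
      ((Equiv.Perm.sign σ : ℤ) : ℝ) *
        (if (∀ i : Fin (n - 1), (σ (stmt8_col1 i)).val = (σ (stmt8_col0 i)).val + 1)
         then ∏ i : Fin (n - 1), ((Nat.choose (2 * n - 4) ((σ (stmt8_col0 i)).val) : ℕ) : ℝ)
         else 0)
      = ∑ σ ∈ univ.filter (fun σ : Equiv.Perm (Fin (2 * n - 2)) =>
          ∀ i : Fin (n - 1), (σ (stmt8_col1 i)).val = (σ (stmt8_col0 i)).val + 1),
          ((Equiv.Perm.sign σ : ℤ) : ℝ) *
            ∏ i : Fin (n - 1), ((Nat.choose (2 * n - 4) ((σ (stmt8_col0 i)).val) : ℕ) : ℝ) := by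
    rw [Finset.sum_filter]
    refine Finset.sum_congr rfl fun σ _ => ?_
    split_ifs with hc
    · rfl
    · rw [mul_zero]
  rw [hsum1]
  have hset : univ.filter (fun σ : Equiv.Perm (Fin (2 * n - 2)) =>
      ∀ i : Fin (n - 1), (σ (stmt8_col1 i)).val = (σ (stmt8_col0 i)).val + 1)
      = Finset.image stmt8_block univ := by
    apply Finset.ext
    intro σ
    simp only [Finset.mem_filter, Finset.mem_univ, true_and, Finset.mem_image]
    constructor
    · intro hg
      obtain ⟨π, hπ⟩ := stmt8_good_exists hn σ hg
      exact ⟨π, hπ⟩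
    · rintro ⟨π, -, rfl⟩
      exact stmt8_block_good π
  rw [hset, Finset.sum_image (fun π _ π' _ h => stmt8_block_inj h)]
  have hterm2 : ∀ π : Equiv.Perm (Fin (n - 1)),
      ((Equiv.Perm.sign (stmt8_block π) : ℤ) : ℝ) *
        ∏ i : Fin (n - 1),
          ((Nat.choose (2 * n - 4) (((stmt8_block π) (stmt8_col0 i)).val) : ℕ) : ℝ)
      = ∏ k ∈ Finset.range (n - 1), ((Nat.choose (2 * n - 4) (2 * k) : ℕ) : ℝ) := by
    intro π
    rw [stmt8_block_sign π]
    have hv : ∀ i : Fin (n - 1), ((stmt8_block π) (stmt8_col0 i)).val = 2 * (π i).val := by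
      intro i
      have pf0 : (stmt8_col0 (n := n) i).val / 2 < n - 1 := by
        have := i.isLt; show (2 * i.val) / 2 < n - 1; omega
      rw [stmt8_block_val π _ pf0]
      have e0 : (⟨(stmt8_col0 (n := n) i).val / 2, pf0⟩ : Fin (n - 1)) = i :=
        Fin.ext (show (2 * i.val) / 2 = i.val by omega)
      rw [e0]
      show 2 * (π i).val + (2 * i.val) % 2 = 2 * (π i).val
      omega
    have hreidx : ∏ i : Fin (n - 1),
        ((Nat.choose (2 * n - 4) (((stmt8_block π) (stmt8_col0 i)).val) : ℕ) : ℝ)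
        = ∏ i : Fin (n - 1), ((Nat.choose (2 * n - 4) (2 * (π i).val) : ℕ) : ℝ) := by
      refine Finset.prod_congr rfl fun i _ => ?_
      rw [hv i]
    rw [hreidx]
    have hcomp := Equiv.prod_comp π
      (fun i : Fin (n - 1) => ((Nat.choose (2 * n - 4) (2 * i.val) : ℕ) : ℝ))
    rw [hcomp]
    rw [← Fin.prod_univ_eq_prod_range (fun k => ((Nat.choose (2 * n - 4) (2 * k) : ℕ) : ℝ))]
    simp only [Units.val_one, Int.cast_one, one_mul]
  rw [Finset.sum_congr rfl (fun π _ => hterm2 π)]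
  rw [Finset.sum_const, Finset.card_univ, Fintype.card_perm, Fintype.card_fin]
  rw [nsmul_eq_mul]
end

section
/- For every integer n ≥ 2, the identity ((2n−3)^{n−1}/(n−1)!) · ∏_{k=0}^{2n−3} C(2n−3, k)^{−1/2} · (n−1)! · ∏_{k=1}^{n−1} C(2n−4, 2k−2) = (2n−3)!! holds. -/
set_option maxRecDepth 10000

open Finset

theorem fac_prod_aux (M : ℕ) :
    ∏ j ∈ range (2*M+2), Nat.factorial j
      = Nat.doubleFactorial (2*M+1) * (∏ k ∈ range (M+1), Nat.factorial (2*k))^2 := by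
  induction M with
  | zero => simp [Nat.factorial, Nat.doubleFactorial]
  | succ m ih =>
      rw [show 2*(m+1)+2 = (2*m+2)+1+1 by ring, prod_range_succ, prod_range_succ, ih,
        show m+1+1 = (m+1)+1 from rfl, prod_range_succ (fun k => Nat.factorial (2*k)) (m+1),
        show 2*(m+1)+1 = (2*m+1)+2 by ring, Nat.doubleFactorial_add_two,
        show (2*m+2+1) = (2*m+2)+1 by ring, Nat.factorial_succ (2*m+2),
        show 2*(m+1) = 2*m+2 by ring]
      ring

theorem key_aux (M : ℕ) :
    (2*M+1)^(M+1) * ∏ k ∈ range (M+1), Nat.choose (2*M) (2*k)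
      = Nat.doubleFactorial (2*M+1) * ∏ k ∈ range (M+1), Nat.choose (2*M+1) k := by
  set D : ℕ := ∏ j ∈ range (2*M+2), Nat.factorial j with hD
  have hDpos : 0 < D := prod_pos fun j _ => Nat.factorial_pos j
  apply Nat.eq_of_mul_eq_mul_right hDpos
  have hrefl : ∏ k ∈ range (M+1), Nat.factorial (2*M - 2*k)
      = ∏ k ∈ range (M+1), Nat.factorial (2*k) := by
    rw [← prod_range_reflect (fun k => Nat.factorial (2*k)) (M+1)]
    exact prod_congr rfl fun k hk => by rw [mem_range] at hk; congr 1; omega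
  have h1 : (∏ k ∈ range (M+1), Nat.choose (2*M) (2*k))
      * (∏ k ∈ range (M+1), Nat.factorial (2*k))
      * (∏ k ∈ range (M+1), Nat.factorial (2*M - 2*k))
      = (Nat.factorial (2*M))^(M+1) := by
    rw [← prod_mul_distrib, ← prod_mul_distrib]
    rw [prod_congr rfl (fun k hk => ?_), prod_const, card_range]
    rw [mem_range] at hk
    exact Nat.choose_mul_factorial_mul_factorial (by omega)
  have h2 : (∏ k ∈ range (M+1), Nat.choose (2*M+1) k)
      * (∏ k ∈ range (M+1), Nat.factorial k)
      * (∏ k ∈ range (M+1), Nat.factorial (2*M+1 - k))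
      = (Nat.factorial (2*M+1))^(M+1) := by
    rw [← prod_mul_distrib, ← prod_mul_distrib]
    rw [prod_congr rfl (fun k hk => ?_), prod_const, card_range]
    rw [mem_range] at hk
    exact Nat.choose_mul_factorial_mul_factorial (by omega)
  have h3 : (∏ k ∈ range (M+1), Nat.factorial k)
      * (∏ k ∈ range (M+1), Nat.factorial (2*M+1 - k)) = D := by
    have : ∏ k ∈ range (M+1), Nat.factorial (2*M+1-k)
        = ∏ k ∈ range (M+1), Nat.factorial (M+1+k) := by
      rw [← prod_range_reflect (fun k => Nat.factorial (M+1+k)) (M+1)]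
      exact prod_congr rfl fun k hk => by rw [mem_range] at hk; congr 1; omega
    rw [this, hD, show 2*M+2 = (M+1)+(M+1) by ring,
      prod_range_add (fun j => Nat.factorial j) (M+1) (M+1)]
  calc (2*M+1)^(M+1) * (∏ k ∈ range (M+1), Nat.choose (2*M) (2*k)) * D
      = (2*M+1)^(M+1) * (∏ k ∈ range (M+1), Nat.choose (2*M) (2*k))
        * (Nat.doubleFactorial (2*M+1) * (∏ k ∈ range (M+1), Nat.factorial (2*k))^2) := by
        rw [hD, fac_prod_aux]
    _ = Nat.doubleFactorial (2*M+1) * ((2*M+1)^(M+1) *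
          ((∏ k ∈ range (M+1), Nat.choose (2*M) (2*k))
            * (∏ k ∈ range (M+1), Nat.factorial (2*k))
            * (∏ k ∈ range (M+1), Nat.factorial (2*M - 2*k)))) := by
        rw [hrefl]; ring
    _ = Nat.doubleFactorial (2*M+1) * ((2*M+1) * Nat.factorial (2*M))^(M+1) := by
        rw [h1, mul_pow]
    _ = Nat.doubleFactorial (2*M+1) * (Nat.factorial (2*M+1))^(M+1) := by
        rw [Nat.factorial_succ]
    _ = Nat.doubleFactorial (2*M+1) * (∏ k ∈ range (M+1), Nat.choose (2*M+1) k) * D := by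
        rw [← h2, ← h3]; ring

/-- for `n ≥ 2`,
`((2n-3)^{n-1}/(n-1)!) · ∏_{k=0}^{2n-3} C(2n-3,k)^{-1/2} · (n-1)! · ∏_{k=1}^{n-1} C(2n-4,2k-2)
  = (2n-3)!!`. -/
theorem stmt9 (n : ℕ) (hn : 2 ≤ n) :
    ((2 * n - 3 : ℕ) : ℝ) ^ (n - 1) / (Nat.factorial (n - 1) : ℝ) *
        (∏ k ∈ Finset.range (2 * n - 2), (Real.sqrt (Nat.choose (2 * n - 3) k))⁻¹) *
        (Nat.factorial (n - 1) : ℝ) *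
        (∏ k ∈ Finset.range (n - 1), ((Nat.choose (2 * n - 4) (2 * k) : ℕ) : ℝ))
      = (Nat.doubleFactorial (2 * n - 3) : ℝ) := by
  obtain ⟨M, rfl⟩ : ∃ M, n = M + 2 := ⟨n - 2, by omega⟩
  simp only [show 2*(M+2)-3 = 2*M+1 by omega, show M+2-1 = M+1 by omega,
    show 2*(M+2)-2 = 2*M+2 by omega, show 2*(M+2)-4 = 2*M by omega]
  have hA : ∏ k ∈ range (2*M+2), (Real.sqrt (Nat.choose (2*M+1) k))⁻¹
      = (∏ k ∈ range (M+1), ((Nat.choose (2*M+1) k : ℕ) : ℝ))⁻¹ := by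
    rw [show 2*M+2 = (M+1)+(M+1) by ring,
      prod_range_add (fun k => (Real.sqrt (Nat.choose (2*M+1) k))⁻¹) (M+1) (M+1)]
    have h2 : ∏ k ∈ range (M+1), (Real.sqrt (Nat.choose (2*M+1) ((M+1)+k)))⁻¹
        = ∏ k ∈ range (M+1), (Real.sqrt (Nat.choose (2*M+1) k))⁻¹ := by
      rw [← prod_range_reflect (fun k => (Real.sqrt (Nat.choose (2*M+1) k))⁻¹) (M+1)]
      refine prod_congr rfl fun k hk => ?_
      rw [mem_range] at hk
      have : Nat.choose (2*M+1) ((M+1)+k) = Nat.choose (2*M+1) (M+1-1-k) := by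
        rw [← Nat.choose_symm (by omega : (M+1)+k ≤ 2*M+1)]
        congr 1; omega
      rw [this]
    rw [h2, ← prod_mul_distrib, ← prod_inv_distrib]
    refine prod_congr rfl fun k hk => ?_
    rw [← mul_inv, Real.mul_self_sqrt (by positivity)]
  rw [hA]
  have key' : ((2*M+1 : ℕ) : ℝ)^(M+1) * ∏ k ∈ range (M+1), ((Nat.choose (2*M) (2*k) : ℕ) : ℝ)
      = (Nat.doubleFactorial (2*M+1) : ℝ)
        * ∏ k ∈ range (M+1), ((Nat.choose (2*M+1) k : ℕ) : ℝ) := by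
    exact_mod_cast congrArg (Nat.cast (R := ℝ)) (key_aux M)
  have hF : ((Nat.factorial (M+1) : ℕ) : ℝ) ≠ 0 := by
    exact_mod_cast (Nat.factorial_pos (M+1)).ne'
  have hP : (0:ℝ) < ∏ k ∈ range (M+1), ((Nat.choose (2*M+1) k : ℕ) : ℝ) := by
    refine prod_pos fun k hk => ?_
    rw [mem_range] at hk
    exact_mod_cast Nat.choose_pos (by omega : k ≤ 2*M+1)
  have hre : ((2*M+1 : ℕ) : ℝ)^(M+1) / ((Nat.factorial (M+1) : ℕ) : ℝ)
        * (∏ k ∈ range (M+1), ((Nat.choose (2*M+1) k : ℕ) : ℝ))⁻¹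
        * ((Nat.factorial (M+1) : ℕ) : ℝ)
        * ∏ k ∈ range (M+1), ((Nat.choose (2*M) (2*k) : ℕ) : ℝ)
      = (((2*M+1 : ℕ) : ℝ)^(M+1) * ∏ k ∈ range (M+1), ((Nat.choose (2*M) (2*k) : ℕ) : ℝ))
        * (((Nat.factorial (M+1) : ℕ) : ℝ) / ((Nat.factorial (M+1) : ℕ) : ℝ))
        * (∏ k ∈ range (M+1), ((Nat.choose (2*M+1) k : ℕ) : ℝ))⁻¹ := by
    ring
  rw [hre, div_self hF, mul_one, key', mul_assoc, mul_inv_cancel₀ hP.ne', mul_one]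
end
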